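/- (Tits) Let (W,S) be a Coxeter system, of arbitrary (possibly infinite) rank. Every finite subgroup of W is contained in a finite parabolic subgroup of W: for every finite subgroup H ≤ W there exist w ∈ W and I ⊆ S such that the standard parabolic subgroup W_I is finite and H ⊆ w W_I w⁻¹. -/

import Mathlib

open Real List

namespace TitsProof

variable {B : Type*} (M : CoxeterMatrix B)

/-- cosine matrix entries -/
noncomputable def cc (i j : B) : ℝ := -Real.cos (Real.pi / M i j)

theorem cc_symm (i j : B) : cc M i j = cc M j i := by
  unfold cc; rw [M.symmetric i j]

theorem cc_self (i : B) : cc M i i = 1 := by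
  unfold cc; rw [M.diagonal i]; norm_num

abbrev V (B : Type*) := B →₀ ℝ

noncomputable def al (i : B) : V B := Finsupp.single i 1

theorem al_ne_zero (i : B) : al i ≠ 0 := by
  simp [al, Finsupp.single_eq_zero]

/-- the bilinear form -/
noncomputable def form : V B →ₗ[ℝ] V B →ₗ[ℝ] ℝ :=
  Finsupp.linearCombination ℝ (fun i => Finsupp.linearCombination ℝ (fun j => cc M i j))

theorem form_al (i : B) : form M (al i) = Finsupp.linearCombination ℝ (fun j => cc M i j) := by
  unfold form al
  rw [Finsupp.linearCombination_single, one_smul]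

theorem form_al_al (i j : B) : form M (al i) (al j) = cc M i j := by
  rw [form_al]
  unfold al
  rw [Finsupp.linearCombination_single, smul_eq_mul, one_mul]

theorem form_al_symm (x : V B) (i : B) : form M x (al i) = form M (al i) x := by
  induction x using Finsupp.induction_linear with
  | zero => simp
  | add a b ha hb => simp [ha, hb]
  | single a r =>
      have : (Finsupp.single a r : V B) = r • al a := by
        simp [al, Finsupp.smul_single]
      rw [this, map_smul, map_smul]
      simp only [LinearMap.smul_apply, smul_eq_mul]
      rw [form_al_al, form_al_al, cc_symm]

/-- the reflection in the geometric representation -/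
noncomputable def refl (i : B) : Module.End ℝ (V B) :=
  LinearMap.id - (2:ℝ) • (form M (al i)).smulRight (al i)

theorem refl_apply (i : B) (v : V B) :
    refl M i v = v - (2 * form M (al i) v) • al i := by
  simp only [refl, LinearMap.sub_apply, LinearMap.id_apply, LinearMap.smul_apply,
    LinearMap.smulRight_apply, smul_smul]

theorem refl_al_self (i : B) : refl M i (al i) = -(al i) := by
  rw [refl_apply, form_al_al, cc_self]
  module

theorem refl_apply_pair_i (i j : B) (A C : ℝ) :
    refl M i (A • al i + C • al j) = (-(2 * cc M i j) * C - A) • al i + C • al j := by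
  rw [refl_apply, map_add, map_smul, map_smul, form_al_al, form_al_al, cc_self, smul_eq_mul,
    smul_eq_mul, mul_one]
  module

theorem refl_apply_pair_j (i j : B) (A C : ℝ) :
    refl M j (A • al i + C • al j) = A • al i + (-(2 * cc M i j) * A - C) • al j := by
  rw [refl_apply, map_add, map_smul, map_smul, form_al_al, form_al_al, cc_self,
    cc_symm M j i, smul_eq_mul, smul_eq_mul, mul_one]
  module

theorem refl_sq (i : B) : refl M i * refl M i = 1 := by
  apply LinearMap.ext
  intro v
  rw [Module.End.mul_apply, refl_apply, refl_apply, map_sub, map_smul, form_al_al, cc_self,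
    Module.End.one_apply]
  simp only [smul_eq_mul, mul_one]
  module

theorem refl_fix (i : B) (v : V B) (h : form M (al i) v = 0) : refl M i v = v := by
  rw [refl_apply, h]
  simp

theorem refl_pow_fix (i j : B) (v : V B) (hi : form M (al i) v = 0)
    (hj : form M (al j) v = 0) (n : ℕ) : ((refl M i * refl M j) ^ n) v = v := by
  induction n with
  | zero => simp
  | succ n ih =>
      rw [pow_succ, Module.End.mul_apply, Module.End.mul_apply, refl_fix M j _ hj,
        refl_fix M i _ hi]
      exact ih

theorem liftable : CoxeterMatrix.IsLiftable M (fun i => refl M i) := by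
  intro i j
  rcases eq_or_ne i j with rfl | hij
  · rw [M.diagonal, pow_one]
    exact refl_sq M i
  rcases Nat.eq_zero_or_pos (M.M i j) with h0 | hpos
  · show (refl M i * refl M j) ^ (M.M i j) = 1
    rw [h0, pow_zero]
  -- now m ≥ 2
  have hm1 : M.M i j ≠ 1 := M.off_diagonal i j hij
  have hm2 : 2 ≤ M.M i j := by omega
  set m : ℕ := M.M i j with hm
  set θ : ℝ := Real.pi / m with hθ
  have hmR : (0:ℝ) < m := by positivity
  have hθpos : 0 < θ := by positivity
  have hθle : θ ≤ π / 2 := by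
    rw [hθ, div_le_div_iff₀ hmR two_pos]
    have : (2:ℝ) ≤ m := by exact_mod_cast hm2
    nlinarith [pi_pos]
  have hθlt : θ < π := lt_of_le_of_lt hθle (by linarith [pi_pos])
  have hsin : 0 < Real.sin θ := Real.sin_pos_of_pos_of_lt_pi hθpos hθlt
  have hcos : cc M i j = -Real.cos θ := rfl
  have hcos0 : 0 ≤ Real.cos θ := Real.cos_nonneg_of_mem_Icc ⟨by linarith, hθle⟩
  have hcos1 : Real.cos θ < 1 := by
    rcases lt_or_eq_of_le (Real.cos_le_one θ) with h | h
    · exact h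
    · exfalso
      have := (Real.cos_eq_one_iff_of_lt_of_lt (x := θ) (by linarith [pi_pos]) (by linarith [pi_pos])).mp h
      linarith
  have hc2 : 1 - (cc M i j)^2 ≠ 0 := by
    rw [hcos]
    nlinarith
  -- sine recurrence
  set S : ℕ → ℝ := fun n => Real.sin (n * θ) with hS
  have hrec : ∀ n : ℕ, S (n + 2) = 2 * Real.cos θ * S (n + 1) - S n := by
    intro n
    have h1 : ((n:ℝ) + 2) * θ = ((n:ℝ)+1) * θ + θ := by ring
    have h2 : (n:ℝ) * θ = ((n:ℝ)+1) * θ - θ := by ring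
    simp only [hS]
    push_cast
    rw [h1, h2, Real.sin_add, Real.sin_sub]
    ring
  -- action on the plane
  have key_i : ∀ k : ℕ, ((refl M i * refl M j) ^ k) (al i)
      = (S (2*k+1) / Real.sin θ) • al i + (S (2*k) / Real.sin θ) • al j := by
    intro k
    induction k with
    | zero =>
        simp only [pow_zero, Module.End.one_apply, hS]
        push_cast
        rw [one_mul, zero_mul, Real.sin_zero]
        rw [div_self (ne_of_gt hsin)]
        simp
    | succ k ih =>
        rw [pow_succ', Module.End.mul_apply, ih, Module.End.mul_apply, refl_apply_pair_j,
          refl_apply_pair_i]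
        have e1 : -(2 * cc M i j) * (S (2*k+1) / Real.sin θ) - S (2*k) / Real.sin θ
            = S (2*k+2) / Real.sin θ := by
          rw [hcos, hrec (2*k)]; ring
        rw [e1]
        have e2 : -(2 * cc M i j) * (S (2*k+2) / Real.sin θ) - S (2*k+1) / Real.sin θ
            = S (2*k+3) / Real.sin θ := by
          rw [hcos, hrec (2*k+1)]
          have h : 2*k+1+1 = 2*k+2 := by omega
          rw [h]; ring
        rw [e2]
        have : 2*(k+1)+1 = 2*k+3 := by omega
        rw [this]
        have : 2*(k+1) = 2*k+2 := by omega
        rw [this]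
  have key_j : ∀ k : ℕ, ((refl M i * refl M j) ^ k) (al j)
      = (-(S (2*k)) / Real.sin θ) • al i
        + ((S (2*k+1) - 2 * Real.cos θ * S (2*k)) / Real.sin θ) • al j := by
    intro k
    induction k with
    | zero =>
        simp only [pow_zero, Module.End.one_apply, hS]
        push_cast
        rw [zero_mul, Real.sin_zero, one_mul]
        rw [neg_zero, zero_div, mul_zero, sub_zero, div_self (ne_of_gt hsin)]
        simp
    | succ k ih =>
        rw [pow_succ', Module.End.mul_apply, ih, Module.End.mul_apply, refl_apply_pair_j,
          refl_apply_pair_i]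
        have e1 : -(2 * cc M i j) * (-(S (2*k)) / Real.sin θ)
            - (S (2*k+1) - 2 * Real.cos θ * S (2*k)) / Real.sin θ
            = -(S (2*k+1)) / Real.sin θ := by
          rw [hcos]; ring
        rw [e1]
        have e2 : -(2 * cc M i j) * (-(S (2*k+1)) / Real.sin θ) - (-(S (2*k)) / Real.sin θ)
            = -(S (2*(k+1))) / Real.sin θ := by
          rw [hcos]
          have : 2*(k+1) = 2*k+2 := by omega
          rw [this, hrec (2*k)]
          ring
        rw [e2]
        have e3 : -(S (2*k+1)) / Real.sin θ
            = (S (2*(k+1)+1) - 2 * Real.cos θ * S (2*(k+1))) / Real.sin θ := by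
          have h1 : 2*(k+1)+1 = 2*k+1+2 := by omega
          have h2 : 2*(k+1) = 2*k+1+1 := by omega
          rw [h1, h2, hrec (2*k+1)]
          ring
        rw [e3]
  -- values at k = m
  have h2m : (2*m : ℝ) * θ = 2 * π := by
    rw [hθ]
    field_simp
  have hS2m : S (2*m) = 0 := by
    simp only [hS]
    push_cast
    rw [h2m]
    simp [Real.sin_two_pi]
  have hS2m1 : S (2*m+1) = Real.sin θ := by
    simp only [hS]
    push_cast
    have : ((2*m:ℝ)+1) * θ = θ + 2 * π := by rw [← h2m]; push_cast; ring
    rw [this, Real.sin_add_two_pi]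
  -- final: check on arbitrary vector
  show (refl M i * refl M j) ^ m = 1
  apply LinearMap.ext
  intro v
  set f := form M (al i) with hf
  set g := form M (al j) with hg
  set c := cc M i j with hc
  set a : ℝ := (f v - c * g v) / (1 - c^2) with ha
  set b : ℝ := (g v - c * f v) / (1 - c^2) with hb
  set u : V B := v - a • al i - b • al j with hu
  have hfu : f u = 0 := by
    rw [hu]
    simp only [map_sub, map_smul, smul_eq_mul]
    rw [hf, form_al_al, form_al_al, cc_self]
    rw [ha, hb, ← hf]
    field_simp
    ring
  have hgu : g u = 0 := by
    rw [hu]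
    simp only [map_sub, map_smul, smul_eq_mul]
    rw [hg, form_al_al, form_al_al, cc_self, cc_symm M j i]
    rw [ha, hb, ← hg, ← hc]
    field_simp
    ring
  have hv : v = a • al i + b • al j + u := by rw [hu]; module
  rw [hv]
  simp only [map_add, map_smul]
  rw [key_i m, key_j m, refl_pow_fix M i j u hfu hgu, hS2m, hS2m1, Module.End.one_apply]
  simp [div_self (ne_of_gt hsin)]

/-! ### The representation -/

variable {W : Type*} [Group W]

noncomputable def rep (cs : CoxeterSystem M W) : W →* Module.End ℝ (V B) :=
  cs.lift ⟨fun i => refl M i, liftable M⟩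

variable {M}
variable (cs : CoxeterSystem M W)

theorem rep_simple (i : B) : rep M cs (cs.simple i) = refl M i :=
  cs.lift_apply_simple (liftable M) i

theorem rep_inv_apply (w : W) (v : V B) : rep M cs w⁻¹ (rep M cs w v) = v := by
  rw [← Module.End.mul_apply, ← map_mul, inv_mul_cancel, map_one, Module.End.one_apply]

theorem rep_injective (w : W) : Function.Injective (rep M cs w) := by
  intro x y h
  have := congrArg (rep M cs w⁻¹) h
  rwa [rep_inv_apply, rep_inv_apply] at this

theorem form_refl_invariant (i : B) (x y : V B) :
    form M (refl M i x) (refl M i y) = form M x y := by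
  rw [refl_apply, refl_apply]
  simp only [map_sub, map_smul, LinearMap.sub_apply, LinearMap.smul_apply, smul_eq_mul]
  rw [form_al_al, cc_self, form_al_symm]
  ring

theorem form_rep_invariant (w : W) (x y : V B) :
    form M (rep M cs w x) (rep M cs w y) = form M x y := by
  induction w using CoxeterSystem.simple_induction_left cs with
  | one => simp
  | mul_simple_left w i ih =>
      rw [map_mul, rep_simple, Module.End.mul_apply, Module.End.mul_apply,
        form_refl_invariant]
      exact ih

/-! ### Positivity -/

def Pos (v : V B) : Prop := ∀ b, 0 ≤ v b

theorem Pos.add {x y : V B} (hx : Pos x) (hy : Pos y) : Pos (x + y) := fun b => by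
  rw [Finsupp.add_apply]; exact add_nonneg (hx b) (hy b)

theorem Pos.smul {x : V B} (hx : Pos x) {a : ℝ} (ha : 0 ≤ a) : Pos (a • x) := fun b => by
  rw [Finsupp.smul_apply]; exact mul_nonneg ha (hx b)

theorem pos_al (i : B) : Pos (al i : V B) := by
  classical
  intro b
  rw [al, Finsupp.single_apply]
  split <;> norm_num

theorem eq_zero_of_pos_of_neg {x : V B} (h1 : Pos x) (h2 : Pos (-x)) : x = 0 := by
  ext b
  have hb1 := h1 b
  have hb2 := h2 b
  rw [Finsupp.neg_apply] at hb2
  have : x b = 0 := le_antisymm (by linarith) hb1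
  simpa using this

/-! ### Roots -/

def IsRoot (x : V B) : Prop := ∃ w j, x = rep M cs w (al j)

theorem isRoot_al (i : B) : IsRoot cs (al i) := ⟨1, i, by simp⟩

theorem IsRoot.rep_apply (w : W) {x : V B} (h : IsRoot cs x) : IsRoot cs (rep M cs w x) := by
  obtain ⟨w', j, rfl⟩ := h
  exact ⟨w * w', j, by rw [map_mul, Module.End.mul_apply]⟩

theorem IsRoot.form_self {x : V B} (h : IsRoot cs x) : form M x x = 1 := by
  obtain ⟨w, j, rfl⟩ := h
  rw [form_rep_invariant, form_al_al, cc_self]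

theorem IsRoot.ne_zero {x : V B} (h : IsRoot cs x) : x ≠ 0 := by
  intro h0
  have := h.form_self
  rw [h0] at this
  simp at this

/-! ### Coset decomposition for the dihedral induction -/

open CoxeterSystem in
theorem coset_decomp (i j : B) (w : W) :
    ∃ v q, (w = v * cs.wordProd (alternatingWord i j q)
        ∨ w = v * cs.wordProd (alternatingWord j i q))
      ∧ cs.length w = cs.length v + q
      ∧ ¬cs.IsRightDescent v i ∧ ¬cs.IsRightDescent v j := by
  generalize hn : cs.length w = n
  induction n using Nat.strong_induction_on generalizing w with
  | _ n ih =>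
  subst hn
  by_cases hdi : cs.IsRightDescent w i
  · have hlen : cs.length (w * cs.simple i) + 1 = cs.length w := cs.isRightDescent_iff.mp hdi
    obtain ⟨v, q, halt, hl, hvi, hvj⟩ :=
      ih (cs.length (w * cs.simple i)) (by omega) (w * cs.simple i) rfl
    have halt1 : w * cs.simple i = v * cs.wordProd (alternatingWord i j q) := by
      rcases halt with h | h
      · exact h
      · cases q with
        | zero => exact h
        | succ q' =>
            exfalso
            rw [alternatingWord_succ, cs.wordProd_concat, ← mul_assoc] at h
            have hw : w = v * cs.wordProd (alternatingWord i j q') := by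
              have := congrArg (fun z => z * cs.simple i) h
              simpa [mul_assoc] using this
            have : cs.length w ≤ cs.length v + q' := by
              calc cs.length w ≤ cs.length v + cs.length (cs.wordProd (alternatingWord i j q')) :=
                    hw ▸ cs.length_mul_le _ _
                _ ≤ cs.length v + q' := by
                    have := cs.length_wordProd_le (alternatingWord i j q')
                    rw [length_alternatingWord] at this
                    omega
            omega
    refine ⟨v, q + 1, Or.inr ?_, by omega, hvi, hvj⟩
    rw [alternatingWord_succ j i q, cs.wordProd_concat, ← mul_assoc, ← halt1]
    rw [mul_assoc, cs.simple_mul_simple_self, mul_one]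
  by_cases hdj : cs.IsRightDescent w j
  · have hlen : cs.length (w * cs.simple j) + 1 = cs.length w := cs.isRightDescent_iff.mp hdj
    obtain ⟨v, q, halt, hl, hvi, hvj⟩ :=
      ih (cs.length (w * cs.simple j)) (by omega) (w * cs.simple j) rfl
    have halt1 : w * cs.simple j = v * cs.wordProd (alternatingWord j i q) := by
      rcases halt with h | h
      swap
      · exact h
      · cases q with
        | zero => exact h
        | succ q' =>
            exfalso
            rw [alternatingWord_succ, cs.wordProd_concat, ← mul_assoc] at h
            have hw : w = v * cs.wordProd (alternatingWord j i q') := by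
              have := congrArg (fun z => z * cs.simple j) h
              simpa [mul_assoc] using this
            have : cs.length w ≤ cs.length v + q' := by
              calc cs.length w ≤ cs.length v + cs.length (cs.wordProd (alternatingWord j i q')) :=
                    hw ▸ cs.length_mul_le _ _
                _ ≤ cs.length v + q' := by
                    have := cs.length_wordProd_le (alternatingWord j i q')
                    rw [length_alternatingWord] at this
                    omega
            omega
    refine ⟨v, q + 1, Or.inl ?_, by omega, hvi, hvj⟩
    rw [alternatingWord_succ i j q, cs.wordProd_concat, ← mul_assoc, ← halt1]
    rw [mul_assoc, cs.simple_mul_simple_self, mul_one]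
  · exact ⟨w, 0, Or.inl (by simp [alternatingWord]), by simp, hdi, hdj⟩

/-! ### Positivity of dihedral alternating words -/

open CoxeterSystem in
theorem alt_pos (i j : B) (hij : i ≠ j) (q : ℕ)
    (hq : M.M i j = 0 ∨ q + 1 ≤ M.M i j) :
    ∃ a b : ℝ, 0 ≤ a ∧ 0 ≤ b ∧
      rep M cs (cs.wordProd (alternatingWord i j q)) (al i) = a • al i + b • al j := by
  have step : ∀ r : ℕ, rep M cs (cs.wordProd (alternatingWord i j (r+1))) (al i)
      = refl M (if Even r then j else i)
          (rep M cs (cs.wordProd (alternatingWord i j r)) (al i)) := by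
    intro r
    rw [alternatingWord_succ', cs.wordProd_cons, map_mul, rep_simple, Module.End.mul_apply]
  rcases hq with h0 | hm
  · -- infinite case
    have hc : cc M i j = -1 := by
      unfold cc; rw [h0]; norm_num
    have main : ∀ r : ℕ, rep M cs (cs.wordProd (alternatingWord i j r)) (al i)
        = ((r : ℝ) + (if Even r then 1 else 0)) • al i
          + ((r : ℝ) + (if Even r then 0 else 1)) • al j := by
      intro r
      induction r with
      | zero => simp [alternatingWord]
      | succ r ihr =>
          rw [step r, ihr]
          by_cases hr : Even r
          · have h1 : ¬ Even (r+1) := by simp [Nat.even_add_one, hr]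
            rw [if_pos hr, if_pos hr, if_pos hr, refl_apply_pair_j M i j, hc,
              if_neg h1, if_neg h1]
            match_scalars <;> push_cast <;> ring
          · have h1 : Even (r+1) := by simp [Nat.even_add_one, hr]
            rw [if_neg hr, if_neg hr, if_neg hr, refl_apply_pair_i M i j, hc,
              if_pos h1, if_pos h1]
            match_scalars <;> push_cast <;> ring
    refine ⟨_, _, ?_, ?_, main q⟩
    · have : (0:ℝ) ≤ (q:ℝ) := Nat.cast_nonneg q
      split <;> linarith
    · have : (0:ℝ) ≤ (q:ℝ) := Nat.cast_nonneg q
      split <;> linarith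
  · -- finite case
    have hm1 : M.M i j ≠ 1 := M.off_diagonal i j hij
    have hm2 : 2 ≤ M.M i j := by omega
    set m : ℕ := M.M i j with hmdef
    set θ : ℝ := Real.pi / m with hθ
    have hmR : (0:ℝ) < m := by positivity
    have hθpos : 0 < θ := by positivity
    have hθle : θ ≤ π / 2 := by
      rw [hθ, div_le_div_iff₀ hmR two_pos]
      have : (2:ℝ) ≤ m := by exact_mod_cast hm2
      nlinarith [pi_pos]
    have hθlt : θ < π := lt_of_le_of_lt hθle (by linarith [pi_pos])
    have hsin : 0 < Real.sin θ := Real.sin_pos_of_pos_of_lt_pi hθpos hθlt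
    have hcos : cc M i j = -Real.cos θ := rfl
    have hmθ : (m:ℝ) * θ = π := by
      rw [hθ]; field_simp
    have trig : ∀ x : ℝ, Real.sin (x + 2*θ) = 2*Real.cos θ * Real.sin (x+θ) - Real.sin x := by
      intro x
      have h1 : x + 2*θ = (x + θ) + θ := by ring
      have h2 := Real.sin_sub (x+θ) θ
      have h3 : (x + θ) - θ = x := by ring
      rw [h3] at h2
      rw [h1, Real.sin_add]
      linarith [h2]
    have main : ∀ r : ℕ, rep M cs (cs.wordProd (alternatingWord i j r)) (al i)
        = (Real.sin (((r:ℝ) + (if Even r then 1 else 0)) * θ) / Real.sin θ) • al i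
          + (Real.sin (((r:ℝ) + (if Even r then 0 else 1)) * θ) / Real.sin θ) • al j := by
      intro r
      induction r with
      | zero =>
          norm_num [alternatingWord]
          rw [div_self (ne_of_gt hsin)]
          simp
      | succ r ihr =>
          rw [step r, ihr]
          by_cases hr : Even r
          · have h1 : ¬ Even (r+1) := by simp [Nat.even_add_one, hr]
            rw [if_pos hr, if_pos hr, if_pos hr, refl_apply_pair_j M i j, hcos,
              if_neg h1, if_neg h1]
            have e2 : -(2 * -Real.cos θ) * (Real.sin (((r:ℝ) + 1) * θ) / Real.sin θ)
                - Real.sin (((r:ℝ) + 0) * θ) / Real.sin θ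
                = Real.sin ((((r:ℕ):ℝ) + 1 + 1) * θ) / Real.sin θ := by
              have := trig ((r:ℝ) * θ)
              rw [show ((r:ℝ) + 1 + 1) * θ = (r:ℝ)*θ + 2*θ by ring,
                show ((r:ℝ) + 1) * θ = (r:ℝ)*θ + θ by ring,
                show ((r:ℝ) + 0) * θ = (r:ℝ)*θ by ring, this]
              ring
            rw [e2]
            match_scalars <;> push_cast <;> ring
          · have h1 : Even (r+1) := by simp [Nat.even_add_one, hr]
            rw [if_neg hr, if_neg hr, if_neg hr, refl_apply_pair_i M i j, hcos,
              if_pos h1, if_pos h1]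
            have e2 : -(2 * -Real.cos θ) * (Real.sin (((r:ℝ) + 1) * θ) / Real.sin θ)
                - Real.sin (((r:ℝ) + 0) * θ) / Real.sin θ
                = Real.sin ((((r:ℕ):ℝ) + 1 + 1) * θ) / Real.sin θ := by
              have := trig ((r:ℝ) * θ)
              rw [show ((r:ℝ) + 1 + 1) * θ = (r:ℝ)*θ + 2*θ by ring,
                show ((r:ℝ) + 1) * θ = (r:ℝ)*θ + θ by ring,
                show ((r:ℝ) + 0) * θ = (r:ℝ)*θ by ring, this]
              ring
            rw [e2]
            match_scalars <;> push_cast <;> ring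
    have hbound : ∀ e : ℕ, e ≤ 1 → 0 ≤ Real.sin (((q:ℝ) + e) * θ) / Real.sin θ := by
      intro e he
      apply div_nonneg _ (le_of_lt hsin)
      apply Real.sin_nonneg_of_nonneg_of_le_pi
      · positivity
      · rw [← hmθ]
        have h1 : (q:ℝ) + e ≤ (m:ℝ) := by
          have : (q:ℝ) + 1 ≤ (m:ℝ) := by exact_mod_cast hm
          have : (e:ℝ) ≤ 1 := by exact_mod_cast he
          linarith
        nlinarith
    refine ⟨_, _, ?_, ?_, main q⟩
    · split
      · simpa using hbound 1 le_rfl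
      · simpa using hbound 0 (by norm_num)
    · split
      · simpa using hbound 0 (by norm_num)
      · simpa using hbound 1 le_rfl

/-! ### The key positivity theorem -/

open CoxeterSystem in
theorem pos_of_not_isRightDescent :
    ∀ (w : W) (i : B), ¬cs.IsRightDescent w i → Pos (rep M cs w (al i)) := by
  suffices h : ∀ (n : ℕ) (w : W) (i : B), cs.length w = n → ¬cs.IsRightDescent w i →
      Pos (rep M cs w (al i)) from fun w i hw => h (cs.length w) w i rfl hw
  intro n
  induction n using Nat.strong_induction_on with
  | _ n ih =>
  intro w i hn hdi
  rcases eq_or_ne w 1 with rfl | hw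
  · rw [map_one, Module.End.one_apply]; exact pos_al i
  obtain ⟨j, hdj⟩ := cs.exists_rightDescent_of_ne_one hw
  have hij : i ≠ j := by rintro rfl; exact hdi hdj
  obtain ⟨v, q, halt, hlen, hvi, hvj⟩ := coset_decomp cs i j w
  have hnd : cs.length (w * cs.simple i) = cs.length w + 1 :=
    cs.not_isRightDescent_iff.mp hdi
  have halt1 : w = v * cs.wordProd (alternatingWord i j q) := by
    rcases halt with h | h
    · exact h
    cases q with
    | zero => exact h
    | succ q' =>
        exfalso
        rw [alternatingWord_succ, cs.wordProd_concat, ← mul_assoc] at h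
        have hws : w * cs.simple i = v * cs.wordProd (alternatingWord i j q') := by
          have := congrArg (fun z => z * cs.simple i) h
          simpa [mul_assoc] using this
        have : cs.length (w * cs.simple i) ≤ cs.length v + q' := by
          calc cs.length (w * cs.simple i)
              ≤ cs.length v + cs.length (cs.wordProd (alternatingWord i j q')) :=
                hws ▸ cs.length_mul_le _ _
            _ ≤ cs.length v + q' := by
                have := cs.length_wordProd_le (alternatingWord i j q')
                rw [length_alternatingWord] at this
                omega
        omega
  have hq1 : 1 ≤ q := by
    rcases Nat.eq_zero_or_pos q with rfl | h
    · exfalso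
      rw [show alternatingWord i j 0 = ([] : List B) from rfl, cs.wordProd_nil, mul_one] at halt1
      exact hvj (halt1 ▸ hdj)
    · exact h
  have hlv : cs.length v < n := by omega
  have hqm : M.M i j = 0 ∨ q + 1 ≤ M.M i j := by
    rcases Nat.eq_zero_or_pos (M.M i j) with h0 | hMpos
    · exact Or.inl h0
    right
    have hM0 : M.M i j ≠ 0 := by omega
    have hred : cs.IsReduced (alternatingWord i j q) := by
      unfold CoxeterSystem.IsReduced
      rw [length_alternatingWord]
      have h1 : cs.length (cs.wordProd (alternatingWord i j q)) ≤ q := by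
        have := cs.length_wordProd_le (alternatingWord i j q)
        rwa [length_alternatingWord] at this
      have h2 : cs.length w ≤ cs.length v + cs.length (cs.wordProd (alternatingWord i j q)) :=
        halt1 ▸ cs.length_mul_le v (cs.wordProd (alternatingWord i j q))
      omega
    have hqle : q ≤ M.M i j := by
      by_contra hgt
      exact cs.not_isReduced_alternatingWord i j hM0 (by omega) hred
    rcases Nat.lt_or_ge q (M.M i j) with h | h
    · omega
    exfalso
    have hqeq : q = M.M i j := le_antisymm hqle h
    have hb := cs.wordProd_braidWord_eq i j
    rw [show CoxeterSystem.braidWord M i j = alternatingWord i j (M.M i j) from rfl,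
      show CoxeterSystem.braidWord M j i = alternatingWord j i (M.M j i) from rfl,
      show M.M j i = M.M i j from M.symmetric j i] at hb
    rw [← hqeq] at hb
    rw [hb] at halt1
    obtain ⟨q', rfl⟩ : ∃ q', q = q' + 1 := ⟨q - 1, by omega⟩
    rw [alternatingWord_succ, cs.wordProd_concat, ← mul_assoc] at halt1
    have hws : w * cs.simple i = v * cs.wordProd (alternatingWord i j q') := by
      have := congrArg (fun z => z * cs.simple i) halt1
      simpa [mul_assoc] using this
    have : cs.length (w * cs.simple i) ≤ cs.length v + q' := by
      calc cs.length (w * cs.simple i)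
          ≤ cs.length v + cs.length (cs.wordProd (alternatingWord i j q')) :=
            hws ▸ cs.length_mul_le _ _
        _ ≤ cs.length v + q' := by
            have := cs.length_wordProd_le (alternatingWord i j q')
            rw [length_alternatingWord] at this
            omega
    omega
  obtain ⟨a, b, ha, hb, hab⟩ := alt_pos cs i j hij q hqm
  rw [halt1, map_mul, Module.End.mul_apply, hab, map_add, map_smul, map_smul]
  exact Pos.add (Pos.smul (ih _ hlv v i rfl hvi) ha) (Pos.smul (ih _ hlv v j rfl hvj) hb)

theorem neg_of_isRightDescent (w : W) (i : B) (h : cs.IsRightDescent w i) :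
    Pos (-(rep M cs w (al i))) := by
  have h2 : ¬cs.IsRightDescent (w * cs.simple i) i :=
    cs.isRightDescent_iff_not_isRightDescent_mul.mp h
  have hp := pos_of_not_isRightDescent cs (w * cs.simple i) i h2
  have heq : rep M cs (w * cs.simple i) (al i) = -(rep M cs w (al i)) := by
    rw [map_mul, Module.End.mul_apply, rep_simple, refl_al_self, map_neg]
  rwa [heq] at hp

theorem not_isRightDescent_iff_pos (w : W) (i : B) :
    ¬cs.IsRightDescent w i ↔ Pos (rep M cs w (al i)) := by
  constructor
  · exact pos_of_not_isRightDescent cs w i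
  · intro hp hd
    have hn := neg_of_isRightDescent cs w i hd
    exact (IsRoot.ne_zero cs ⟨w, i, rfl⟩) (eq_zero_of_pos_of_neg hp hn)

/-! ### Root dichotomy and the permutation lemma -/

theorem IsRoot.pos_or_neg {x : V B} (h : IsRoot cs x) : Pos x ∨ Pos (-x) := by
  obtain ⟨w, jj, rfl⟩ := h
  by_cases hd : cs.IsRightDescent w jj
  · exact Or.inr (neg_of_isRightDescent cs w jj hd)
  · exact Or.inl (pos_of_not_isRightDescent cs w jj hd)

theorem refl_invol (i : B) (x : V B) : refl M i (refl M i x) = x := by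
  have := LinearMap.congr_fun (refl_sq M i) x
  rwa [Module.End.mul_apply] at this

theorem IsRoot.eq_al_of_support {x : V B} (h : IsRoot cs x) (hp : Pos x) (i : B)
    (hs : ∀ b, b ≠ i → x b = 0) : x = al i := by
  classical
  have hx : x = (x i) • al i := by
    ext b
    rcases eq_or_ne b i with rfl | hb
    · simp [al, Finsupp.smul_apply, Finsupp.single_apply]
    · rw [hs b hb, Finsupp.smul_apply, al, Finsupp.single_apply, if_neg (Ne.symm hb)]
      simp
  have hform := h.form_self cs
  rw [hx] at hform
  simp only [map_smul, LinearMap.smul_apply, smul_eq_mul] at hform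
  rw [form_al_al, cc_self] at hform
  have hsq : (x i) * (x i) = 1 := by linarith [hform]
  have hpos : 0 ≤ x i := hp i
  have : x i = 1 := by nlinarith
  rw [hx, this, one_smul]

theorem refl_perm {x : V B} (h : IsRoot cs x) (hp : Pos x) (i : B) (hx : x ≠ al i) :
    IsRoot cs (refl M i x) ∧ Pos (refl M i x) ∧ refl M i x ≠ al i := by
  classical
  have hb : ∃ b, b ≠ i ∧ 0 < x b := by
    by_contra hc
    push_neg at hc
    exact hx (h.eq_al_of_support cs hp i (fun b hbi => le_antisymm (hc b hbi) (hp b)))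
  obtain ⟨b, hbi, hxb⟩ := hb
  have hroot : IsRoot cs (refl M i x) := by
    have heq : refl M i x = rep M cs (cs.simple i) x := by rw [rep_simple]
    rw [heq]; exact h.rep_apply cs _
  have hcoord : (refl M i x) b = x b := by
    rw [refl_apply, Finsupp.sub_apply, Finsupp.smul_apply, al, Finsupp.single_apply,
      if_neg (Ne.symm hbi)]
    simp
  have hpos : Pos (refl M i x) := by
    rcases (hroot.pos_or_neg cs) with h1 | h1
    · exact h1
    · exfalso
      have h2 := h1 b
      rw [Finsupp.neg_apply, hcoord] at h2
      linarith
  refine ⟨hroot, hpos, ?_⟩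
  intro he
  have hxe : x = refl M i (al i) := by rw [← he, refl_invol]
  rw [refl_al_self] at hxe
  have := hp i
  rw [hxe] at this
  simp only [Finsupp.neg_apply] at this
  have : (al i : V B) i ≤ 0 := by linarith
  rw [al, Finsupp.single_apply, if_pos rfl] at this
  linarith

/-! ### Inversion sets -/

def InvSet (w : W) : Set (V B) :=
  {x | IsRoot cs x ∧ Pos x ∧ ¬ Pos (rep M cs w x)}

theorem InvSet_one : InvSet cs (1 : W) = ∅ := by
  ext x
  simp only [InvSet, Set.mem_setOf_eq, Set.mem_empty_iff_false, iff_false, not_and]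
  intro _ hp
  rw [map_one, Module.End.one_apply]
  simp [hp]

theorem al_mem_InvSet_iff (w : W) (i : B) :
    al i ∈ InvSet cs w ↔ cs.IsRightDescent w i := by
  constructor
  · intro ⟨_, _, hnp⟩
    by_contra hd
    exact hnp (pos_of_not_isRightDescent cs w i hd)
  · intro hd
    refine ⟨isRoot_al cs i, pos_al i, ?_⟩
    rw [← not_isRightDescent_iff_pos] at *
    simpa using hd

theorem rep_mul_simple_apply (w : W) (i : B) (x : V B) :
    rep M cs (w * cs.simple i) x = rep M cs w (refl M i x) := by
  rw [map_mul, Module.End.mul_apply, rep_simple]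

theorem InvSet_mul_simple_subset (w : W) (i : B) :
    InvSet cs (w * cs.simple i) ⊆ insert (al i) (refl M i '' (InvSet cs w)) := by
  rintro x ⟨hr, hp, hnp⟩
  by_cases hx : x = al i
  · exact Set.mem_insert_iff.mpr (Or.inl hx)
  · refine Set.mem_insert_iff.mpr (Or.inr ⟨refl M i x, ?_, refl_invol i x⟩)
    obtain ⟨hr', hp', _⟩ := refl_perm cs hr hp i hx
    refine ⟨hr', hp', ?_⟩
    rwa [rep_mul_simple_apply] at hnp
    
theorem InvSet_finite (w : W) : (InvSet cs w).Finite := by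
  induction w using CoxeterSystem.simple_induction_right cs with
  | one => rw [InvSet_one]; exact Set.finite_empty
  | mul_simple_right w i ih =>
      exact Set.Finite.subset (Set.Finite.insert _ (Set.Finite.image _ ih))
        (InvSet_mul_simple_subset cs w i)

theorem InvSet_mul_simple_eq (w : W) (i : B) (h : al i ∈ InvSet cs w) :
    InvSet cs (w * cs.simple i) = refl M i '' (InvSet cs w \ {al i}) := by
  classical
  obtain ⟨_, _, hnpi⟩ := h
  have hwal : Pos (rep M cs w (-(al i))) := by
    rcases (IsRoot.pos_or_neg cs ⟨w, i, rfl⟩) with h1 | h1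
    · exact absurd h1 hnpi
    · rwa [← map_neg] at h1
  ext x
  constructor
  · rintro ⟨hr, hp, hnp⟩
    have hx : x ≠ al i := by
      rintro rfl
      rw [rep_mul_simple_apply, refl_al_self] at hnp
      exact hnp hwal
    refine ⟨refl M i x, ⟨?_, ?_⟩, refl_invol i x⟩
    · obtain ⟨hr', hp', _⟩ := refl_perm cs hr hp i hx
      refine ⟨hr', hp', ?_⟩
      rwa [rep_mul_simple_apply] at hnp
    · simp only [Set.mem_singleton_iff]
      intro he
      have : x = refl M i (al i) := by rw [← he, refl_invol]
      rw [refl_al_self] at this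
      have h2 := hp i
      rw [this] at h2
      simp only [Finsupp.neg_apply] at h2
      have h3 : (al i : V B) i = 1 := by rw [al, Finsupp.single_apply, if_pos rfl]
      rw [h3] at h2
      linarith
  · rintro ⟨y, ⟨⟨hr, hp, hnp⟩, hy⟩, rfl⟩
    simp only [Set.mem_singleton_iff] at hy
    obtain ⟨hr', hp', _⟩ := refl_perm cs hr hp i hy
    refine ⟨hr', hp', ?_⟩
    rwa [rep_mul_simple_apply, refl_invol]

theorem InvSet_injective : ∀ (w w' : W), InvSet cs w = InvSet cs w' → w = w' := by
  suffices h : ∀ (n : ℕ) (w w' : W), cs.length w = n → InvSet cs w = InvSet cs w' → w = w' from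
    fun w w' => h (cs.length w) w w' rfl
  intro n
  induction n using Nat.strong_induction_on with
  | _ n ih =>
  intro w w' hn heq
  rcases eq_or_ne w 1 with rfl | hw
  · rcases eq_or_ne w' 1 with rfl | hw'
    · rfl
    · exfalso
      obtain ⟨i, hdi⟩ := cs.exists_rightDescent_of_ne_one hw'
      have : al i ∈ InvSet cs w' := (al_mem_InvSet_iff cs w' i).mpr hdi
      rw [← heq, InvSet_one] at this
      exact this
  · obtain ⟨i, hdi⟩ := cs.exists_rightDescent_of_ne_one hw
    have hmem : al i ∈ InvSet cs w := (al_mem_InvSet_iff cs w i).mpr hdi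
    have hmem' : al i ∈ InvSet cs w' := heq ▸ hmem
    have heq2 : InvSet cs (w * cs.simple i) = InvSet cs (w' * cs.simple i) := by
      rw [InvSet_mul_simple_eq cs w i hmem, InvSet_mul_simple_eq cs w' i hmem', heq]
    have hlen : cs.length (w * cs.simple i) < n := by
      have := cs.isRightDescent_iff.mp hdi
      omega
    have := ih _ (hn ▸ hlen) (w * cs.simple i) (w' * cs.simple i) rfl heq2
    calc w = (w * cs.simple i) * cs.simple i := by rw [cs.simple_mul_simple_cancel_right]
      _ = (w' * cs.simple i) * cs.simple i := by rw [this]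
      _ = w' := by rw [cs.simple_mul_simple_cancel_right]

/-! ### The positive functional -/

noncomputable def f0 : V B →ₗ[ℝ] ℝ := Finsupp.linearCombination ℝ (fun _ => (1:ℝ))

theorem linear_nonneg_of_pos (f : V B →ₗ[ℝ] ℝ) (hf : ∀ b, 0 ≤ f (al b)) {x : V B}
    (hx : Pos x) : 0 ≤ f x := by
  have hrep : x = x.sum (fun b r => r • al b) := by
    conv_lhs => rw [← Finsupp.sum_single x]
    apply Finsupp.sum_congr
    intro b _
    rw [al, Finsupp.smul_single, smul_eq_mul, mul_one]
  have : f x = x.sum (fun b r => r * f (al b)) := by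
    conv_lhs => rw [hrep]
    rw [map_finsuppSum]
    apply Finsupp.sum_congr
    intro b _
    rw [map_smul, smul_eq_mul]
  rw [this, Finsupp.sum]
  apply Finset.sum_nonneg
  intro b _
  exact mul_nonneg (hx b) (hf b)

theorem f0_al (b : B) : (f0 : V B →ₗ[ℝ] ℝ) (al b) = 1 := by
  rw [f0, al, Finsupp.linearCombination_single]
  simp

theorem f0_pos_of_pos {x : V B} (hx : Pos x) (h0 : x ≠ 0) : 0 < (f0 : V B →ₗ[ℝ] ℝ) x := by
  rw [f0, Finsupp.linearCombination_apply]
  obtain ⟨b, hb⟩ : ∃ b, x b ≠ 0 := by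
    by_contra hc
    push_neg at hc
    exact h0 (Finsupp.ext hc)
  have hbs : b ∈ x.support := Finsupp.mem_support_iff.mpr hb
  rw [Finsupp.sum]
  apply Finset.sum_pos'
  · intro c _
    simpa using hx c
  · exact ⟨b, hbs, by simpa using lt_of_le_of_ne (hx b) (Ne.symm hb)⟩

theorem f0_neg_of_neg {x : V B} (hx : Pos (-x)) (h0 : x ≠ 0) : (f0 : V B →ₗ[ℝ] ℝ) x < 0 := by
  have := f0_pos_of_pos (B := B) hx (by simpa using h0)
  rw [map_neg] at this
  linarith

/-! ### The stabilizer / parabolic lemmas -/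

theorem rep_apply_inv_apply (w : W) (v : V B) : rep M cs w (rep M cs w⁻¹ v) = v := by
  have := rep_inv_apply cs w⁻¹ v
  rwa [inv_inv] at this

theorem refl_injective (i : B) : Function.Injective (refl M i) := fun a b h => by
  have := congrArg (refl M i) h
  rwa [refl_invol, refl_invol] at this

theorem fixed_of_zero (f : V B →ₗ[ℝ] ℝ) (i : B) (hfi : f (al i) = 0) (x : V B) :
    f (refl M i x) = f x := by
  rw [refl_apply, map_sub, map_smul, hfi]
  simp

theorem stab_mem_parabolic (f : V B →ₗ[ℝ] ℝ) (hf : ∀ b, 0 ≤ f (al b)) :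
    ∀ w : W, (∀ x, f (rep M cs w x) = f x) →
      w ∈ Subgroup.closure (cs.simple '' {b | f (al b) = 0}) := by
  suffices h : ∀ (n : ℕ) (w : W), cs.length w = n → (∀ x, f (rep M cs w x) = f x) →
      w ∈ Subgroup.closure (cs.simple '' {b | f (al b) = 0}) from
    fun w => h (cs.length w) w rfl
  intro n
  induction n using Nat.strong_induction_on with
  | _ n ih =>
  intro w hn hfix
  rcases eq_or_ne w 1 with rfl | hw
  · exact Subgroup.one_mem _
  obtain ⟨i, hdi⟩ := cs.exists_leftDescent_of_ne_one hw
  have hdri : cs.IsRightDescent w⁻¹ i := cs.isRightDescent_inv_iff.mpr hdi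
  have hneg : Pos (-(rep M cs w⁻¹ (al i))) := neg_of_isRightDescent cs w⁻¹ i hdri
  have hle : f (al i) ≤ 0 := by
    have h1 : f (al i) = f (rep M cs w⁻¹ (al i)) := by
      conv_lhs => rw [← rep_apply_inv_apply cs w (al i)]
      rw [hfix]
    have h2 : 0 ≤ f (-(rep M cs w⁻¹ (al i))) := linear_nonneg_of_pos f hf hneg
    rw [map_neg] at h2
    linarith
  have hzero : f (al i) = 0 := le_antisymm hle (hf i)
  have hfix2 : ∀ x, f (rep M cs (cs.simple i * w) x) = f x := by
    intro x
    rw [map_mul, Module.End.mul_apply, rep_simple, fixed_of_zero f i hzero, hfix]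
  have hlen : cs.length (cs.simple i * w) < n := by
    have := hdi
    unfold CoxeterSystem.IsLeftDescent at this
    omega
  have hmem := ih _ hlen (cs.simple i * w) rfl hfix2
  have : w = cs.simple i * (cs.simple i * w) := by rw [cs.simple_mul_simple_cancel_left]
  rw [this]
  exact Subgroup.mul_mem _
    (Subgroup.subset_closure ⟨i, hzero, rfl⟩) hmem

theorem parabolic_invariant (f : V B →ₗ[ℝ] ℝ) {I : Set B} (hI : ∀ i ∈ I, f (al i) = 0)
    {w : W} (hw : w ∈ Subgroup.closure (cs.simple '' I)) :
    ∀ x, f (rep M cs w x) = f x := by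
  induction hw using Subgroup.closure_induction with
  | mem g hg =>
      obtain ⟨i, hi, rfl⟩ := hg
      intro x
      rw [rep_simple, fixed_of_zero f i (hI i hi)]
  | one => intro x; rw [map_one]; rfl
  | mul a b _ _ iha ihb =>
      intro x
      rw [map_mul, Module.End.mul_apply, iha, ihb]
  | inv a _ iha =>
      intro x
      have h2 := iha (rep M cs a⁻¹ x)
      rw [rep_apply_inv_apply] at h2
      exact h2.symm

theorem parabolic_finite (f : V B →ₗ[ℝ] ℝ) (hf : ∀ b, 0 ≤ f (al b))
    (hZ : {x : V B | IsRoot cs x ∧ Pos x ∧ f x = 0}.Finite) :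
    Finite ↥(Subgroup.closure (cs.simple '' {b | f (al b) = 0})) := by
  set Z := {x : V B | IsRoot cs x ∧ Pos x ∧ f x = 0} with hZdef
  set P := Subgroup.closure (cs.simple '' {b | f (al b) = 0}) with hP
  have hsub : ∀ w : W, w ∈ P → InvSet cs w ⊆ Z := by
    intro w hw x hx
    obtain ⟨hr, hp, hnp⟩ := hx
    have hfix := parabolic_invariant cs f (fun i hi => hi) hw
    have h1 : f (rep M cs w x) = f x := hfix x
    have h2 : Pos (-(rep M cs w x)) := by
      rcases (hr.rep_apply cs w).pos_or_neg cs with h | h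
      · exact absurd h hnp
      · exact h
    have h3 : 0 ≤ f (-(rep M cs w x)) := linear_nonneg_of_pos f hf h2
    rw [map_neg] at h3
    have h4 : 0 ≤ f x := linear_nonneg_of_pos f hf hp
    exact ⟨hr, hp, by linarith⟩
  have hfin : {S : Set (V B) | S ⊆ Z}.Finite := hZ.finite_subsets
  have : Finite ↥{S : Set (V B) | S ⊆ Z} := hfin.to_subtype
  apply Finite.of_injective
    (fun w : ↥P => (⟨InvSet cs (w : W), hsub w w.2⟩ : ↥{S : Set (V B) | S ⊆ Z}))
  intro a b hab
  have := InvSet_injective cs (a : W) (b : W) (by simpa using congrArg Subtype.val hab)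
  exact Subtype.ext this

/-! ### The sum functional and the Tits cone algorithm -/

noncomputable def gsum (L : Finset W) : V B →ₗ[ℝ] ℝ :=
  ∑ h ∈ L, (f0.comp (rep M cs h⁻¹))

theorem gsum_apply (L : Finset W) (x : V B) :
    gsum cs L x = ∑ h ∈ L, (f0 : V B →ₗ[ℝ] ℝ) (rep M cs h⁻¹ x) := by
  rw [gsum, LinearMap.sum_apply]
  rfl

theorem nonpos_subset (L : Finset W) (hL : L.Nonempty) (u : W) :
    {x : V B | IsRoot cs x ∧ Pos x ∧ gsum cs L (rep M cs u x) ≤ 0}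
      ⊆ ⋃ h ∈ L, InvSet cs (h⁻¹ * u) := by
  rintro x ⟨hr, hp, hle⟩
  by_contra hnot
  simp only [Set.mem_iUnion, not_exists] at hnot
  have hpos : ∀ h ∈ L, 0 < (f0 : V B →ₗ[ℝ] ℝ) (rep M cs h⁻¹ (rep M cs u x)) := by
    intro h hh
    have hroot : IsRoot cs (rep M cs (h⁻¹ * u) x) := hr.rep_apply cs _
    have hrw : rep M cs h⁻¹ (rep M cs u x) = rep M cs (h⁻¹ * u) x := by
      rw [map_mul, Module.End.mul_apply]
    rw [hrw]
    have hppos : Pos (rep M cs (h⁻¹ * u) x) := by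
      by_contra hnp
      exact hnot h hh ⟨hr, hp, hnp⟩
    exact f0_pos_of_pos hppos (by
      intro h0
      exact (hr.ne_zero cs) (by
        have := congrArg (rep M cs (h⁻¹ * u)⁻¹) h0
        rwa [rep_inv_apply, map_zero] at this))
  have : 0 < gsum cs L (rep M cs u x) := by
    rw [gsum_apply]
    exact Finset.sum_pos (fun h hh => hpos h hh) hL
  linarith

theorem negset_finite (L : Finset W) (hL : L.Nonempty) (u : W) :
    {x : V B | IsRoot cs x ∧ Pos x ∧ gsum cs L (rep M cs u x) < 0}.Finite := by
  apply Set.Finite.subset _ (fun x hx => nonpos_subset cs L hL u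
    ⟨hx.1, hx.2.1, le_of_lt hx.2.2⟩)
  exact Set.Finite.biUnion L.finite_toSet (fun h _ => InvSet_finite cs (h⁻¹ * u))

theorem exists_dominant (L : Finset W) (hL : L.Nonempty) :
    ∃ u : W, ∀ i : B, 0 ≤ gsum cs L (rep M cs u (al i)) := by
  classical
  set NS : W → Set (V B) :=
    fun u => {x : V B | IsRoot cs x ∧ Pos x ∧ gsum cs L (rep M cs u x) < 0} with hNS
  suffices h : ∀ (n : ℕ) (u : W), (NS u).ncard = n →
      ∃ u' : W, ∀ i : B, 0 ≤ gsum cs L (rep M cs u' (al i)) from h (NS 1).ncard 1 rfl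
  intro n
  induction n using Nat.strong_induction_on with
  | _ n ih =>
  intro u hn
  by_cases hex : ∃ i : B, gsum cs L (rep M cs u (al i)) < 0
  · obtain ⟨i, hi⟩ := hex
    have hfin : (NS u).Finite := negset_finite cs L hL u
    have hmem : al i ∈ NS u := ⟨isRoot_al cs i, pos_al i, hi⟩
    have heq : NS (u * cs.simple i) = refl M i '' (NS u \ {al i}) := by
      ext x
      constructor
      · rintro ⟨hr, hp, hneg⟩
        have hx : x ≠ al i := by
          rintro rfl
          rw [rep_mul_simple_apply, refl_al_self, map_neg, map_neg] at hneg
          linarith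
        obtain ⟨hr', hp', _⟩ := refl_perm cs hr hp i hx
        refine ⟨refl M i x, ⟨⟨hr', hp', ?_⟩, ?_⟩, refl_invol i x⟩
        · rwa [rep_mul_simple_apply] at hneg
        · simp only [Set.mem_singleton_iff]
          intro he
          have hxe : x = refl M i (al i) := by rw [← he, refl_invol]
          rw [refl_al_self] at hxe
          have h2 := hp i
          rw [hxe] at h2
          simp only [Finsupp.neg_apply] at h2
          have h3 : (al i : V B) i = 1 := by
            classical
            rw [al, Finsupp.single_apply, if_pos rfl]
          rw [h3] at h2
          linarith
      · rintro ⟨y, ⟨⟨hr, hp, hneg⟩, hy⟩, rfl⟩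
        simp only [Set.mem_singleton_iff] at hy
        obtain ⟨hr', hp', _⟩ := refl_perm cs hr hp i hy
        refine ⟨hr', hp', ?_⟩
        rwa [rep_mul_simple_apply, refl_invol]
    have hcard : (NS (u * cs.simple i)).ncard < n := by
      rw [heq, Set.ncard_image_of_injective _ (refl_injective (M := M) i)]
      rw [Set.ncard_diff_singleton_of_mem hmem]
      have hpos : 0 < (NS u).ncard := (Set.ncard_pos hfin).mpr ⟨al i, hmem⟩
      omega
    exact ih _ hcard (u * cs.simple i) rfl
  · push_neg at hex
    exact ⟨u, hex⟩

end TitsProof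

open TitsProof

/-- (Tits) Every finite subgroup of a Coxeter group (of arbitrary rank) is contained in a finite
parabolic subgroup, i.e. in a conjugate `w W_I w⁻¹` of a finite standard parabolic
subgroup `W_I`. -/
theorem stmt_2 {B W : Type*} [Group W] {M : CoxeterMatrix B} (cs : CoxeterSystem M W)
    (H : Subgroup W) (hH : Finite ↥H) :
    ∃ (w : W) (I : Set B),
      Finite ↥(Subgroup.closure (cs.simple '' I)) ∧
      H ≤ (Subgroup.closure (cs.simple '' I)).map (MulAut.conj w).toMonoidHom := by
  classical
  have hfin : (H : Set W).Finite := Set.toFinite _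
  set L : Finset W := hfin.toFinset with hLdef
  have hmem : ∀ a : W, a ∈ L ↔ a ∈ H := fun a => hfin.mem_toFinset
  have hL1 : (1 : W) ∈ L := (hmem 1).mpr H.one_mem
  have hLne : L.Nonempty := ⟨1, hL1⟩
  obtain ⟨u, hu⟩ := exists_dominant cs L hLne
  set f : V B →ₗ[ℝ] ℝ := (gsum cs L).comp (rep M cs u) with hfdef
  have hf : ∀ b, 0 ≤ f (al b) := fun b => by
    rw [hfdef, LinearMap.comp_apply]; exact hu b
  have hginv : ∀ h, h ∈ H → ∀ x : V B, gsum cs L (rep M cs h x) = gsum cs L x := by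
    intro h hh x
    rw [gsum_apply, gsum_apply]
    refine Finset.sum_bij (fun a _ => h⁻¹ * a) ?_ ?_ ?_ ?_
    · intro a ha
      rw [hmem] at ha ⊢
      exact H.mul_mem (H.inv_mem hh) ha
    · intro a _ b _ hab
      exact mul_left_cancel hab
    · intro b hb
      refine ⟨h * b, ?_, by show h⁻¹ * (h * b) = b; group⟩
      rw [hmem] at hb ⊢
      exact H.mul_mem hh hb
    · intro a _
      have : rep M cs a⁻¹ (rep M cs h x) = rep M cs (h⁻¹ * a)⁻¹ x := by
        rw [← Module.End.mul_apply, ← map_mul]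
        congr 2
        group
      rw [this]
  refine ⟨u, {b : B | f (al b) = 0}, ?_, ?_⟩
  · apply parabolic_finite cs f hf
    apply Set.Finite.subset
      (Set.Finite.biUnion L.finite_toSet (fun h _ => InvSet_finite cs (h⁻¹ * u)))
    intro x hx
    obtain ⟨hr, hp, hz⟩ := hx
    have : gsum cs L (rep M cs u x) = 0 := by
      rw [← LinearMap.comp_apply, ← hfdef]; exact hz
    exact nonpos_subset cs L hLne u ⟨hr, hp, le_of_eq this⟩
  · intro h hh
    rw [Subgroup.mem_map]
    refine ⟨u⁻¹ * h * u, ?_, ?_⟩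
    · apply stab_mem_parabolic cs f hf
      intro x
      rw [hfdef, LinearMap.comp_apply, LinearMap.comp_apply]
      have e1 : rep M cs u (rep M cs (u⁻¹ * h * u) x) = rep M cs h (rep M cs u x) := by
        rw [← Module.End.mul_apply, ← map_mul, ← Module.End.mul_apply (rep M cs h), ← map_mul]
        congr 1
        group
      rw [e1, hginv h hh]
    · have : (MulAut.conj u).toMonoidHom (u⁻¹ * h * u) = u * (u⁻¹ * h * u) * u⁻¹ := rfl
      rw [this]
      group
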